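/- Let K be a field, s ≥ 2, σ_1, ..., σ_s distinct homomorphisms from K to a field Ω restricting to the identity on a subfield k, and suppose K = k(α_1, ..., α_{n}). Let F_q ⊆ k be a finite subfield and T ∈ k transcendental over F_q. Then there exist f_1, ..., f_n ∈ F_q[T], each zero or of degree at most s - 1, such that α = Σ_j f_j α_j satisfies σ_1(α) ≠ σ_l(α) for all l = 2, ..., s. -/

import Mathlib

lemma grid_avoid {Ω : Type*} [Field Ω] {ι : Type*} [DecidableEq ι] :
    ∀ (n : ℕ) (I : Finset ι) (v : ι → Fin n → Ω), (∀ i ∈ I, v i ≠ 0) →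
    ∀ (S : Finset Ω), I.card < S.card →
    ∃ x : Fin n → Ω, (∀ j, x j ∈ S) ∧ ∀ i ∈ I, ∑ j, v i j * x j ≠ 0 := by
  intro n
  induction n with
  | zero =>
    intro I v hv S _
    exact ⟨fun j => j.elim0, fun j => j.elim0, fun i hi =>
      absurd (funext fun j => j.elim0) (hv i hi)⟩
  | succ n ih =>
    intro I v hv S hcard
    classical
    set I₁ : Finset ι := I.filter (fun i => Fin.init (v i) ≠ 0) with hI₁
    obtain ⟨x', hx'S, hx'⟩ := ih I₁ (fun i => Fin.init (v i))
      (fun i hi => (Finset.mem_filter.mp hi).2) S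
      (lt_of_le_of_lt (Finset.card_filter_le _ _) hcard)
    set c : ι → Ω := fun i => ∑ j : Fin n, v i (Fin.castSucc j) * x' j with hc
    set B : Finset Ω := I.image (fun i => - c i / v i (Fin.last n)) with hB
    have hBcard : B.card < S.card := lt_of_le_of_lt (Finset.card_image_le) hcard
    obtain ⟨t, htS, htB⟩ : ∃ t ∈ S, t ∉ B := by
      by_contra h
      push_neg at h
      exact absurd (Finset.card_le_card h) (not_le.mpr hBcard)
    refine ⟨(Fin.snoc x' t : Fin (n+1) → Ω), ?_, ?_⟩
    · intro j
      rcases Fin.eq_castSucc_or_eq_last j with ⟨i, rfl⟩ | rfl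
      · simpa using hx'S i
      · simpa using htS
    · intro i hi
      have hsum : ∑ j, v i j * (Fin.snoc x' t : Fin (n+1) → Ω) j = c i + v i (Fin.last n) * t := by
        rw [Fin.sum_univ_castSucc]
        simp [hc]
      rw [hsum]
      by_cases hlast : v i (Fin.last n) = 0
      · have hinit : Fin.init (v i) ≠ 0 := by
          intro h0
          apply hv i hi
          funext j
          induction j using Fin.lastCases with
          | last => exact hlast
          | cast j' => exact congrFun h0 j'
        have : i ∈ I₁ := Finset.mem_filter.mpr ⟨hi, hinit⟩
        have hci : c i ≠ 0 := by
          have := hx' i this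
          simpa [hc, Fin.init] using this
        simp [hlast, hci]
      · intro h0
        apply htB
        rw [hB, Finset.mem_image]
        exact ⟨i, hi, by field_simp; linear_combination -h0⟩

/-- Let `K` be a field, `s ≥ 2`, `σ_1, ..., σ_s` distinct homomorphisms
`K → Ω` restricting to the identity on a subfield `k`, `K = k(α_1, ..., α_n)`, `F_q`
a finite subfield of `k` (embedded via `φ`), and `T ∈ k` transcendental over `F_q`.
Then there are `f_1, ..., f_n ∈ F_q[T]`, each zero or of degree at most `s - 1`,
such that `α = Σ_j f_j α_j` satisfies `σ_1(α) ≠ σ_l(α)` for all `l = 2, ..., s`. -/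
theorem stmt_11 (k K Ω : Type*) [Field k] [Field K] [Field Ω]
    [Algebra k K] [Algebra k Ω]
    (Fq : Type*) [Field Fq] [Fintype Fq] (φ : Fq →+* k) (T : k)
    (hT : Function.Injective fun f : Polynomial Fq => Polynomial.eval₂ φ T f)
    (s : ℕ) (hs : 2 ≤ s) (σ : Fin s → (K →ₐ[k] Ω)) (hσ : Function.Injective σ)
    (n : ℕ) (α : Fin n → K)
    (hgen : IntermediateField.adjoin k (Set.range α) = ⊤) :
    ∃ f : Fin n → Polynomial Fq, (∀ j, f j = 0 ∨ (f j).natDegree ≤ s - 1) ∧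
      ∀ l : Fin s, l ≠ ⟨0, by omega⟩ →
        σ ⟨0, by omega⟩ (∑ j, algebraMap k K (Polynomial.eval₂ φ T (f j)) * α j) ≠
          σ l (∑ j, algebraMap k K (Polynomial.eval₂ φ T (f j)) * α j) := by
  classical
  set z : Fin s := ⟨0, by omega⟩ with hz
  -- the nonzero linear forms
  set v : Fin s → Fin n → Ω := fun l j => σ z (α j) - σ l (α j) with hv
  have hvne : ∀ l ∈ Finset.univ.erase z, v l ≠ 0 := by
    intro l hl h0
    have hlz : l ≠ z := (Finset.mem_erase.mp hl).1
    apply hlz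
    apply hσ
    -- equalizer intermediate field
    set E : IntermediateField k K :=
      { AlgHom.equalizer (σ z) (σ l) with
        inv_mem' := fun x hx => by
          have hx' : σ z x = σ l x := hx
          show σ z x⁻¹ = σ l x⁻¹
          rw [map_inv₀, map_inv₀, hx'] } with hE
    have hle : IntermediateField.adjoin k (Set.range α) ≤ E := by
      rw [IntermediateField.adjoin_le_iff]
      rintro x ⟨j, rfl⟩
      show σ z (α j) = σ l (α j)
      have := congrFun h0 j
      simp only [hv, Pi.zero_apply, sub_eq_zero] at this
      exact this
    rw [hgen] at hle
    ext x
    exact (hle (IntermediateField.mem_top (x := x)) : σ z x = σ l x).symm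
  -- the polynomials of degree < s
  set poly : (Fin s → Fq) → Polynomial Fq :=
    fun a => ∑ i : Fin s, Polynomial.C (a i) * Polynomial.X ^ (i : ℕ) with hpoly
  have hcoeff : ∀ a (j : Fin s), (poly a).coeff (j : ℕ) = a j := by
    intro a j
    rw [hpoly, Polynomial.finset_sum_coeff]
    simp only [Polynomial.coeff_C_mul, Polynomial.coeff_X_pow, mul_ite, mul_one, mul_zero]
    have : ∀ i : Fin s, (if (j:ℕ) = (i:ℕ) then a i else 0) = (if j = i then a i else 0) := by
      intro i; simp [Fin.val_inj]
    simp_rw [this]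
    rw [Finset.sum_ite_eq Finset.univ j (fun i => a i)]
    simp
  have hdeg : ∀ a, (poly a).natDegree ≤ s - 1 := by
    intro a
    apply Polynomial.natDegree_sum_le_of_forall_le
    intro i _
    refine le_trans (Polynomial.natDegree_C_mul_le _ _) ?_
    rw [Polynomial.natDegree_X_pow]
    omega
  set emb : (Fin s → Fq) → Ω :=
    fun a => algebraMap k Ω (Polynomial.eval₂ φ T (poly a)) with hemb
  have hembinj : Function.Injective emb := by
    intro a b hab
    have h1 : Polynomial.eval₂ φ T (poly a) = Polynomial.eval₂ φ T (poly b) :=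
      (algebraMap k Ω).injective hab
    have h2 : poly a = poly b := hT h1
    funext j
    rw [← hcoeff a j, ← hcoeff b j, h2]
  set S : Finset Ω := Finset.univ.image emb with hS
  have hcard : (Finset.univ.erase z).card < S.card := by
    rw [hS, Finset.card_image_of_injective _ hembinj, Finset.card_erase_of_mem (Finset.mem_univ z)]
    simp only [Finset.card_univ, Fintype.card_fin, Fintype.card_fun]
    have h2q : 2 ≤ Fintype.card Fq := Fintype.one_lt_card
    calc s - 1 < 2 ^ s := by
          have := @Nat.lt_two_pow_self s
          omega
      _ ≤ Fintype.card Fq ^ s := Nat.pow_le_pow_left h2q s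
  obtain ⟨x, hxS, hx⟩ := grid_avoid n (Finset.univ.erase z) v hvne S hcard
  choose a ha using fun j => Finset.mem_image.mp (hxS j)
  refine ⟨fun j => poly (a j), fun j => Or.inr (hdeg (a j)), ?_⟩
  intro l hl heq
  apply hx l (Finset.mem_erase.mpr ⟨hl, Finset.mem_univ l⟩)
  have hσsum : ∀ m : Fin s,
      σ m (∑ j, algebraMap k K (Polynomial.eval₂ φ T (poly (a j))) * α j)
        = ∑ j, algebraMap k Ω (Polynomial.eval₂ φ T (poly (a j))) * σ m (α j) := by
    intro m
    rw [map_sum]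
    congr 1
    funext j
    rw [map_mul, AlgHom.commutes]
  have hx' : ∀ j, x j = algebraMap k Ω (Polynomial.eval₂ φ T (poly (a j))) := by
    intro j
    exact ((ha j).2).symm
  calc ∑ j, v l j * x j
      = ∑ j, (σ z (α j) - σ l (α j)) * algebraMap k Ω (Polynomial.eval₂ φ T (poly (a j))) := by
        congr 1; funext j; rw [hx', hv]
    _ = σ z (∑ j, algebraMap k K (Polynomial.eval₂ φ T (poly (a j))) * α j)
        - σ l (∑ j, algebraMap k K (Polynomial.eval₂ φ T (poly (a j))) * α j) := by
        rw [hσsum, hσsum, ← Finset.sum_sub_distrib]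
        congr 1; funext j; ring
    _ = 0 := by rw [heq, sub_self]
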